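/- arXiv:1711.04296 — 2 statements merged into one kernel-verified Lean document; each statement's English description precedes it below -/
import Mathlib

section
/- Let K be a field, ν a valuation on K[x] with trivial support, K̄ an algebraic closure of K, and μ an extension of ν to K̄[x]. If Q ∈ K[x] is a key polynomial for ν and a ∈ K̄ is a root of Q with μ(x−a) = δ(Q), then for every b ∈ K̄ with μ(a−b) ≥ δ(Q) one has μ(x−b) ≥ δ(Q), hence δ(p_b) ≥ δ(Q) where p_b is the minimal polynomial of b over K, and [K(b):K] ≥ [K(a):K]. -/
open Polynomial

section KeyPolyDefs

variable {K : Type*} [Field K] {Γ : Type*} [AddCommGroup Γ] [LinearOrder Γ] [IsOrderedAddMonoid Γ]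

/-- The value `ν f` read in `Γ` (junk value `0` when `ν f = ⊤`). -/
noncomputable def aval (ν : AddValuation (Polynomial K) (WithTop Γ)) (f : Polynomial K) : Γ :=
  WithTop.untopD 0 (ν f)

/-- `ν` has trivial support: only `0` has value `⊤`. -/
def TrivialSupport (ν : AddValuation (Polynomial K) (WithTop Γ)) : Prop :=
  ∀ f : Polynomial K, ν f = ⊤ → f = 0

/-- The set of indices `r`, `1 ≤ r ≤ deg f` with `∂_r f ≠ 0`, over which `ε(f)` is computed. -/
noncomputable def epsSupport (f : Polynomial K) : Finset ℕ :=
  @Finset.filter _ (fun r => f.hasseDeriv r ≠ 0) (Classical.decPred _) (Finset.Icc 1 f.natDegree)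

/-- `ε(f) = max_{r ≥ 1} (ν f - ν ∂_r f) / r`, computed in the divisible group `Γ`. -/
noncomputable def eps [Module ℚ Γ] (ν : AddValuation (Polynomial K) (WithTop Γ))
    (f : Polynomial K) : Γ :=
  if h : (epsSupport f).Nonempty then
    (epsSupport f).sup' h fun r => ((r : ℚ)⁻¹) • (aval ν f - aval ν (f.hasseDeriv r))
  else 0

/-- `Q` is a key polynomial for `ν`: `Q` is monic and every `f` with `ε(f) ≥ ε(Q)` satisfies
`deg f ≥ deg Q`. -/
def IsKeyPoly [Module ℚ Γ] (ν : AddValuation (Polynomial K) (WithTop Γ))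
    (Q : Polynomial K) : Prop :=
  Q.Monic ∧ 0 < Q.natDegree ∧
    ∀ f : Polynomial K, 0 < f.natDegree → eps ν Q ≤ eps ν f → Q.natDegree ≤ f.natDegree

/-- The `i`-th coefficient of the `q`-expansion of a polynomial. -/
noncomputable def qCoeff (q : Polynomial K) : ℕ → Polynomial K → Polynomial K
  | 0, p => p % q
  | n + 1, p => qCoeff q n (p / q)

/-- The `q`-truncation `ν_q` of `ν`:  `ν_q(p) = min_i ν(p_i q^i)` where `p = Σ p_i q^i`
is the `q`-expansion of `p`. -/
noncomputable def trunc (ν : AddValuation (Polynomial K) (WithTop Γ)) (q p : Polynomial K) :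
    WithTop Γ :=
  (Finset.range (p.natDegree + 1)).inf fun i => ν (qCoeff q i p * q ^ i)

variable {L : Type*} [Field L] [Algebra K L]

/-- `δ(f)`: the maximal value `μ(x - a)` over the roots `a` of `f` in `L`
(junk value `0` if `f` has no roots in `L`). -/
noncomputable def delta (μ : AddValuation (Polynomial L) (WithTop Γ)) (f : Polynomial K) : Γ :=
  letI := Classical.decEq L
  if h : ((f.map (algebraMap K L)).roots.toFinset).Nonempty then
    ((f.map (algebraMap K L)).roots.toFinset).sup' h fun a => aval μ (X - C a)
  else 0

/-- `μ` on `L[x]` extends `ν` on `K[x]`. -/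
def IsExtension (μ : AddValuation (Polynomial L) (WithTop Γ))
    (ν : AddValuation (Polynomial K) (WithTop Γ)) : Prop :=
  ∀ f : Polynomial K, μ (f.map (algebraMap K L)) = ν f

/-- `w` on `K(x)` extends `ν` on `K[x]`. -/
def ExtendsToRatFunc (w : AddValuation (RatFunc K) (WithTop Γ))
    (ν : AddValuation (Polynomial K) (WithTop Γ)) : Prop :=
  ∀ p : Polynomial K, w (algebraMap (Polynomial K) (RatFunc K) p) = ν p

/-- The residue of `f` is transcendental over the residue field `Kν`:  every polynomial with
coefficients in the valuation ring of `K`, at least one of which is a unit, keeps value `0`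
when evaluated at `f`. -/
def ResidueTranscendentalElem (w : AddValuation (RatFunc K) (WithTop Γ)) (f : RatFunc K) : Prop :=
  ∀ (n : ℕ) (c : ℕ → K),
    (∀ i ≤ n, 0 ≤ w (algebraMap K (RatFunc K) (c i))) →
    (∃ i ≤ n, w (algebraMap K (RatFunc K) (c i)) = 0) →
    w (∑ i ∈ Finset.range (n + 1), algebraMap K (RatFunc K) (c i) * f ^ i) = 0

/-- The residue of `g` is algebraic over the residue field `Kν`: some polynomial with
coefficients in the valuation ring of `K`, at least one of which is a unit, gets positive
value when evaluated at `g`. -/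
def ResidueAlgebraicElem (w : AddValuation (RatFunc K) (WithTop Γ)) (g : RatFunc K) : Prop :=
  ∃ (n : ℕ) (c : ℕ → K),
    (∀ i ≤ n, 0 ≤ w (algebraMap K (RatFunc K) (c i))) ∧
    (∃ i ≤ n, w (algebraMap K (RatFunc K) (c i)) = 0) ∧
    0 < w (∑ i ∈ Finset.range (n + 1), algebraMap K (RatFunc K) (c i) * g ^ i)

/-- `w` is residue-transcendental: some `f` with `w f = 0` has transcendental residue. -/
def IsResidueTranscendental (w : AddValuation (RatFunc K) (WithTop Γ)) : Prop :=
  ∃ f : RatFunc K, w f = 0 ∧ ResidueTranscendentalElem w f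

/-- `w` is value-transcendental: some value `w f` is torsion-free over the value group
`νK` of `K`, i.e. `n ν(f) ∉ νK` for every `n ≥ 1`. -/
def IsValueTranscendental (w : AddValuation (RatFunc K) (WithTop Γ)) : Prop :=
  ∃ f : RatFunc K, f ≠ 0 ∧
    ∀ n : ℕ, 0 < n → ∀ c : K, c ≠ 0 → w (f ^ n) ≠ w (algebraMap K (RatFunc K) c)

/-- `w` is valuation-transcendental: it is value-transcendental or residue-transcendental. -/
def IsValuationTranscendental (w : AddValuation (RatFunc K) (WithTop Γ)) : Prop :=
  IsValueTranscendental w ∨ IsResidueTranscendental w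

end KeyPolyDefs

section MinimalPairDefs

variable {Γ : Type*} [AddCommGroup Γ] [LinearOrder Γ] [IsOrderedAddMonoid Γ] {L : Type*} [Field L]

/-- `(a, d)` is a minimal pair for the valuation (w.r.t. the extension `μ` to `L[x]`):
every `b` with `μ(b - a) ≥ d` satisfies `[K(b) : K] ≥ [K(a) : K]`. -/
def IsMinimalPair (K : Type*) [Field K] [Algebra K L]
    (μ : AddValuation (Polynomial L) (WithTop Γ)) (a : L) (d : Γ) : Prop :=
  ∀ b : L, (d : WithTop Γ) ≤ μ (C (b - a)) →
    (minpoly K a).natDegree ≤ (minpoly K b).natDegree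

/-- `(a, d)` is a minimal pair of definition: a minimal pair with `μ(x - a) = d ≥ μ(x - b)`
for every `b ∈ L`. -/
def IsMinimalPairOfDefinition (K : Type*) [Field K] [Algebra K L]
    (μ : AddValuation (Polynomial L) (WithTop Γ)) (a : L) (d : Γ) : Prop :=
  IsMinimalPair K μ a d ∧ μ (X - C a) = (d : WithTop Γ) ∧
    ∀ b : L, μ (X - C b) ≤ (d : WithTop Γ)

end MinimalPairDefs

section Aux2

variable {Γ : Type*} [AddCommGroup Γ] [LinearOrder Γ] [IsOrderedAddMonoid Γ] {L : Type*} [Field L]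
variable (μ : AddValuation (Polynomial L) (WithTop Γ))

/-- sum of values of `X - C a` over a multiset -/
noncomputable def WSum (t : Multiset L) : Γ :=
  (t.map fun a => WithTop.untopD 0 (μ (X - C a))).sum

theorem val_coe (hμ : ∀ f : Polynomial L, μ f = ⊤ → f = 0) {p : Polynomial L} (hp : p ≠ 0) :
    μ p = (WithTop.untopD 0 (μ p) : Γ) := by
  cases h : μ p with
  | top => exact absurd (hμ p h) hp
  | coe x => simp

theorem val_XsubC (hμ : ∀ f : Polynomial L, μ f = ⊤ → f = 0) (a : L) :
    μ (X - C a) = (WithTop.untopD 0 (μ (X - C a)) : Γ) :=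
  val_coe μ hμ (X_sub_C_ne_zero a)

theorem val_prod (hμ : ∀ f : Polynomial L, μ f = ⊤ → f = 0) (t : Multiset L) :
    μ ((t.map fun a => X - C a).prod) = ((WSum μ t : Γ) : WithTop Γ) := by
  induction t using Multiset.induction with
  | empty => simp [WSum, AddValuation.map_one]
  | cons a s ih =>
      rw [Multiset.map_cons, Multiset.prod_cons, AddValuation.map_mul, ih,
        val_XsubC μ hμ a, ← WithTop.coe_add]
      simp [WSum]

end Aux2

section Aux3

variable {Γ : Type*} [AddCommGroup Γ] [LinearOrder Γ] [IsOrderedAddMonoid Γ] {L : Type*} [Field L]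
variable (μ : AddValuation (Polynomial L) (WithTop Γ))

theorem WSum_cons (a : L) (s : Multiset L) :
    WSum μ (a ::ₘ s) = WithTop.untopD 0 (μ (X - C a)) + WSum μ s := by
  simp [WSum]

theorem WSum_add (s t : Multiset L) : WSum μ (s + t) = WSum μ s + WSum μ t := by
  simp [WSum]

theorem coe_add_lt {x y : WithTop Γ} {c₁ c₂ : Γ} (h₁ : (c₁ : WithTop Γ) ≤ x)
    (h₂ : (c₂ : WithTop Γ) < y) : ((c₁ + c₂ : Γ) : WithTop Γ) < x + y := by
  cases x with
  | top => rw [top_add]; exact WithTop.coe_lt_top _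
  | coe γ =>
      calc ((c₁ + c₂ : Γ) : WithTop Γ) ≤ ((γ + c₂ : Γ) : WithTop Γ) := by
            exact_mod_cast add_le_add_left (WithTop.coe_le_coe.1 h₁) c₂
        _ = (γ : WithTop Γ) + (c₂ : WithTop Γ) := by push_cast; rfl
        _ < (γ : WithTop Γ) + y := WithTop.add_lt_add_left (WithTop.coe_ne_top) h₂

theorem hasse_bound (hμ : ∀ f : Polynomial L, μ f = ⊤ → f = 0) {t : Multiset L} {d : Γ}
    (hd : ∀ a ∈ t, WithTop.untopD 0 (μ (X - C a)) ≤ d) (k : ℕ) :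
    ((WSum μ t - k • d : Γ) : WithTop Γ) ≤
      μ (Polynomial.hasseDeriv k (t.map fun a => X - C a).prod) := by
  induction t using Multiset.induction generalizing k with
  | empty =>
      cases k with
      | zero => simp [WSum, hasseDeriv_zero', AddValuation.map_one]
      | succ k =>
          rw [Multiset.map_zero, Multiset.prod_zero,
            hasseDeriv_eq_zero_of_lt_natDegree _ _ (by simp), AddValuation.map_zero]
          exact le_top
  | cons a s ih =>
      have hda : WithTop.untopD 0 (μ (X - C a)) ≤ d := hd a (Multiset.mem_cons_self a s)
      have hds : ∀ b ∈ s, WithTop.untopD 0 (μ (X - C b)) ≤ d :=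
        fun b hb => hd b (Multiset.mem_cons_of_mem hb)
      cases k with
      | zero =>
          rw [hasseDeriv_zero', val_prod μ hμ]
          simp
      | succ k =>
          rw [Multiset.map_cons, Multiset.prod_cons, hasseDeriv_mul]
          apply AddValuation.map_le_sum
          rintro ⟨i, j⟩ hij
          rw [Finset.HasAntidiagonal.mem_antidiagonal] at hij
          dsimp only at hij ⊢
          rcases i with _ | _ | n
          · have hj : j = k + 1 := by omega
            subst hj
            rw [hasseDeriv_zero', AddValuation.map_mul, val_XsubC μ hμ a]
            have h1 : WSum μ (a ::ₘ s) - (k+1) • d =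
                WithTop.untopD 0 (μ (X - C a)) + (WSum μ s - (k+1) • d) := by
              rw [WSum_cons]; abel
            rw [h1, WithTop.coe_add]
            exact add_le_add_right (ih hds (k+1)) _
          · have hj : k = j := by omega
            subst hj
            rw [show Polynomial.hasseDeriv 1 (X - C a) = 1 by
                simp [hasseDeriv_one'], one_mul]
            refine le_trans ?_ (ih hds k)
            rw [WithTop.coe_le_coe]
            have h2 : WSum μ (a ::ₘ s) - (k+1) • d =
                (WSum μ s - k • d) + (WithTop.untopD 0 (μ (X - C a)) - d) := by
              rw [WSum_cons, succ_nsmul]; abel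
            rw [h2]
            simpa using sub_nonpos.2 hda
          · rw [hasseDeriv_eq_zero_of_lt_natDegree (X - C a) (n+2)
              (by rw [natDegree_X_sub_C]; omega), zero_mul, AddValuation.map_zero]
            exact le_top

theorem hasse_strict (hμ : ∀ f : Polynomial L, μ f = ⊤ → f = 0) {t : Multiset L} {d : Γ}
    (hd : ∀ a ∈ t, WithTop.untopD 0 (μ (X - C a)) < d) (k : ℕ) :
    ((WSum μ t - (k+1) • d : Γ) : WithTop Γ) <
      μ (Polynomial.hasseDeriv (k+1) (t.map fun a => X - C a).prod) := by
  induction t using Multiset.induction generalizing k with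
  | empty =>
      rw [Multiset.map_zero, Multiset.prod_zero,
        hasseDeriv_eq_zero_of_lt_natDegree _ _ (by simp), AddValuation.map_zero]
      exact WithTop.coe_lt_top _
  | cons a s ih =>
      have hda : WithTop.untopD 0 (μ (X - C a)) < d := hd a (Multiset.mem_cons_self a s)
      have hds : ∀ b ∈ s, WithTop.untopD 0 (μ (X - C b)) < d :=
        fun b hb => hd b (Multiset.mem_cons_of_mem hb)
      rw [Multiset.map_cons, Multiset.prod_cons, hasseDeriv_mul]
      apply AddValuation.map_lt_sum' μ (WithTop.coe_lt_top _)
      rintro ⟨i, j⟩ hij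
      rw [Finset.HasAntidiagonal.mem_antidiagonal] at hij
      dsimp only at hij ⊢
      rcases i with _ | _ | n
      · have hj : j = k + 1 := by omega
        subst hj
        rw [hasseDeriv_zero', AddValuation.map_mul, val_XsubC μ hμ a]
        have h1 : WSum μ (a ::ₘ s) - (k+1) • d =
            WithTop.untopD 0 (μ (X - C a)) + (WSum μ s - (k+1) • d) := by
          rw [WSum_cons]; abel
        rw [h1, WithTop.coe_add]
        exact WithTop.add_lt_add_left WithTop.coe_ne_top (ih hds k)
      · have hj : k = j := by omega
        subst hj
        rw [show Polynomial.hasseDeriv 1 (X - C a) = 1 by simp [hasseDeriv_one'], one_mul]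
        have hlt : WSum μ (a ::ₘ s) - (k+1) • d < WSum μ s - k • d := by
          have h2 : WSum μ (a ::ₘ s) - (k+1) • d =
              (WSum μ s - k • d) + (WithTop.untopD 0 (μ (X - C a)) - d) := by
            rw [WSum_cons, succ_nsmul]; abel
          rw [h2]
          simpa using sub_neg.2 hda
        cases k with
        | zero =>
            rw [hasseDeriv_zero']
            rw [val_prod μ hμ]
            exact lt_of_lt_of_le (WithTop.coe_lt_coe.2 hlt) (by simp)
        | succ m =>
            exact lt_of_lt_of_le (WithTop.coe_lt_coe.2 hlt)
              (le_trans (by exact_mod_cast le_refl _) (hasse_bound μ hμ (fun b hb => (hds b hb).le) (m+1)))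
      · rw [hasseDeriv_eq_zero_of_lt_natDegree (X - C a) (n+2)
          (by rw [natDegree_X_sub_C]; omega), zero_mul, AddValuation.map_zero]
        exact WithTop.coe_lt_top _

end Aux3

section Aux4

variable {Γ : Type*} [AddCommGroup Γ] [LinearOrder Γ] [IsOrderedAddMonoid Γ] {L : Type*} [Field L]
variable (μ : AddValuation (Polynomial L) (WithTop Γ))

theorem hasse_top_monic {p : Polynomial L} (hp : p.Monic) :
    Polynomial.hasseDeriv p.natDegree p = 1 := by
  ext n
  rw [Polynomial.hasseDeriv_coeff]
  cases n with
  | zero => simp [hp.coeff_natDegree]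
  | succ n =>
      rw [Polynomial.coeff_eq_zero_of_natDegree_lt (by omega), mul_zero]
      rw [Polynomial.coeff_one]
      simp

theorem hasse_top_prod (t : Multiset L) :
    Polynomial.hasseDeriv (Multiset.card t) ((t.map fun a => X - C a).prod) = 1 := by
  have hm : ((t.map fun a => X - C a).prod).Monic :=
    monic_multiset_prod_of_monic _ _ fun a _ => monic_X_sub_C a
  have hd : ((t.map fun a => X - C a).prod).natDegree = Multiset.card t :=
    natDegree_multiset_prod_X_sub_C_eq_card t
  rw [← hd]
  exact hasse_top_monic hm

theorem WSum_const {S : Multiset L} {d : Γ} (hS : ∀ a ∈ S, WithTop.untopD 0 (μ (X - C a)) = d) :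
    WSum μ S = Multiset.card S • d := by
  rw [WSum, Multiset.map_congr rfl hS, Multiset.map_const', Multiset.sum_replicate]

theorem hasse_exact (hμ : ∀ f : Polynomial L, μ f = ⊤ → f = 0) {S T : Multiset L} {d : Γ}
    (hS : ∀ a ∈ S, WithTop.untopD 0 (μ (X - C a)) = d) (hT : ∀ a ∈ T, WithTop.untopD 0 (μ (X - C a)) < d) :
    μ (Polynomial.hasseDeriv (Multiset.card S) (((S + T).map fun a => X - C a).prod)) =
      ((WSum μ T : Γ) : WithTop Γ) := by
  set r := Multiset.card S with hr
  rw [Multiset.map_add, Multiset.prod_add, hasseDeriv_mul]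
  rw [← Finset.add_sum_erase _ _ (show ((r, 0) : ℕ × ℕ) ∈ Finset.HasAntidiagonal.antidiagonal r from
    Finset.HasAntidiagonal.mem_antidiagonal.2 (by simp))]
  rw [show (Polynomial.hasseDeriv (r, 0).1 ((S.map fun a => X - C a).prod) *
      Polynomial.hasseDeriv (r, 0).2 ((T.map fun a => X - C a).prod)) =
      (T.map fun a => X - C a).prod by
    dsimp only
    rw [hr, hasse_top_prod S, hasseDeriv_zero', one_mul]]
  rw [AddValuation.map_add_eq_of_lt_left]
  · exact val_prod μ hμ T
  · rw [val_prod μ hμ T]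
    apply AddValuation.map_lt_sum' μ (WithTop.coe_lt_top _)
    rintro ⟨i, j⟩ hij
    rw [Finset.mem_erase, Finset.HasAntidiagonal.mem_antidiagonal] at hij
    obtain ⟨hne, hsum⟩ := hij
    dsimp only at hsum ⊢
    have hj : 1 ≤ j := by
      rcases Nat.eq_zero_or_pos j with h0 | h1
      · exfalso; apply hne; subst h0; simp at hsum ⊢; omega
      · exact h1
    have h1 : ((WSum μ S - i • d : Γ) : WithTop Γ) ≤
        μ (Polynomial.hasseDeriv i ((S.map fun a => X - C a).prod)) :=
      hasse_bound μ hμ (fun a haa => le_of_eq (hS a haa)) i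
    have h2 : ((WSum μ T - j • d : Γ) : WithTop Γ) <
        μ (Polynomial.hasseDeriv j ((T.map fun a => X - C a).prod)) := by
      obtain ⟨j', rfl⟩ : ∃ j', j = j' + 1 := ⟨j - 1, by omega⟩
      exact hasse_strict μ hμ hT j'
    have h3 := coe_add_lt h1 h2
    rw [AddValuation.map_mul]
    refine lt_of_le_of_lt (le_of_eq ?_) h3
    rw [WithTop.coe_eq_coe]
    rw [WSum_const μ hS, ← hr, ← hsum, add_nsmul]
    abel

end Aux4

section Aux5

variable {K : Type*} [Field K] {Γ : Type*} [AddCommGroup Γ] [LinearOrder Γ] [IsOrderedAddMonoid Γ]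
variable {L : Type*} [Field L]

theorem val_coe' {A : Type*} [CommRing A] (v : AddValuation A (WithTop Γ)) {p : A}
    (h : v p = ⊤ → p = 0) (hp : p ≠ 0) : v p = (WithTop.untopD 0 (v p) : Γ) := by
  cases hv : v p with
  | top => exact absurd (h hv) hp
  | coe x => simp

theorem hasseDeriv_map_comm (φ : K →+* L) (f : Polynomial K) (r : ℕ) :
    (f.hasseDeriv r).map φ = (f.map φ).hasseDeriv r := by
  ext n
  simp [Polynomial.coeff_map, Polynomial.hasseDeriv_coeff, map_mul, map_natCast]

theorem mem_epsSupport {f : Polynomial K} {r : ℕ} :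
    r ∈ epsSupport f ↔ (1 ≤ r ∧ r ≤ f.natDegree) ∧ f.hasseDeriv r ≠ 0 := by
  simp [epsSupport, Finset.mem_filter, Finset.mem_Icc]

theorem epsSupport_nonempty {f : Polynomial K} (hf : 0 < f.natDegree) :
    (epsSupport f).Nonempty := by
  refine ⟨f.natDegree, mem_epsSupport.2 ⟨⟨hf, le_refl _⟩, ?_⟩⟩
  intro h0
  have hc : (f.hasseDeriv f.natDegree).coeff 0 = f.leadingCoeff := by
    rw [Polynomial.hasseDeriv_coeff, Nat.zero_add, Nat.choose_self, Nat.cast_one, one_mul]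
    rfl
  rw [h0, Polynomial.coeff_zero] at hc
  have : f = 0 := Polynomial.leadingCoeff_eq_zero.1 hc.symm
  rw [this] at hf
  simp at hf
end Aux5

section Main

variable {K : Type*} [Field K] {Γ : Type*} [AddCommGroup Γ] [LinearOrder Γ] [IsOrderedAddMonoid Γ]
  [Module ℚ Γ] [PosSMulStrictMono ℚ Γ] [PosSMulReflectLT ℚ Γ]
  {L : Type*} [Field L] [Algebra K L] [IsAlgClosed L]

theorem le_delta_of_root (μ : AddValuation (Polynomial L) (WithTop Γ)) {f : Polynomial K}
    (hf : f.map (algebraMap K L) ≠ 0) {b : L} (hb : (f.map (algebraMap K L)).eval b = 0) :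
    aval μ (X - C b) ≤ delta μ f := by
  letI : DecidableEq L := Classical.decEq L
  have hmem : b ∈ (f.map (algebraMap K L)).roots := Polynomial.mem_roots'.2 ⟨hf, hb⟩
  have hne : ((f.map (algebraMap K L)).roots.toFinset).Nonempty :=
    ⟨b, Multiset.mem_toFinset.2 hmem⟩
  unfold delta
  rw [dif_pos hne]
  exact Finset.le_sup' (fun a => aval μ (X - C a)) (Multiset.mem_toFinset.2 hmem)

theorem eps_le_delta (ν : AddValuation (Polynomial K) (WithTop Γ))
    (μ : AddValuation (Polynomial L) (WithTop Γ))
    (hν : TrivialSupport ν) (hμL : TrivialSupport μ) (hext : IsExtension μ ν)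
    (f : Polynomial K) (hf0 : 0 < f.natDegree) : eps ν f ≤ delta μ f := by
  classical
  letI : DecidableEq L := Classical.decEq L
  have hf : f ≠ 0 := fun h => by simp [h] at hf0
  have hF : f.map (algebraMap K L) ≠ 0 :=
    (Polynomial.map_ne_zero_iff (algebraMap K L).injective).2 hf
  have hsplit : (f.map (algebraMap K L)).Splits := IsAlgClosed.splits _
  have hcard : Multiset.card (f.map (algebraMap K L)).roots = f.natDegree := by
    rw [Polynomial.splits_iff_card_roots.1 hsplit, Polynomial.natDegree_map]
  have hprod : f.map (algebraMap K L) = C (f.map (algebraMap K L)).leadingCoeff *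
      ((f.map (algebraMap K L)).roots.map fun a => X - C a).prod :=
    hsplit.eq_prod_roots
  have hRne : (f.map (algebraMap K L)).roots ≠ 0 := by
    intro h; rw [h] at hcard; simp at hcard; omega
  have hne : ((f.map (algebraMap K L)).roots.toFinset).Nonempty := by
    rwa [Multiset.toFinset_nonempty]
  have hdelta : delta μ f = ((f.map (algebraMap K L)).roots.toFinset).sup' hne
      fun a => aval μ (X - C a) := by
    unfold delta; rw [dif_pos]
  have hub : ∀ a ∈ (f.map (algebraMap K L)).roots, WithTop.untopD 0 (μ (X - C a)) ≤ delta μ f := by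
    intro a haa
    rw [hdelta]
    exact Finset.le_sup' (fun a => aval μ (X - C a)) (Multiset.mem_toFinset.2 haa)
  have hcne : C (f.map (algebraMap K L)).leadingCoeff ≠ (0 : Polynomial L) := fun h =>
    (Polynomial.leadingCoeff_ne_zero.2 hF) (Polynomial.C_eq_zero.1 h)
  have hCc : μ (C (f.map (algebraMap K L)).leadingCoeff) =
      (WithTop.untopD 0 (μ (C (f.map (algebraMap K L)).leadingCoeff)) : Γ) :=
    val_coe μ hμL hcne
  set vc := WithTop.untopD 0 (μ (C (f.map (algebraMap K L)).leadingCoeff)) with hvc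
  have hdF : ∀ r : ℕ, Polynomial.hasseDeriv r (f.map (algebraMap K L)) =
      C (f.map (algebraMap K L)).leadingCoeff *
        Polynomial.hasseDeriv r (((f.map (algebraMap K L)).roots.map fun a => X - C a).prod) := by
    intro r
    conv_lhs => rw [hprod]
    rw [← Polynomial.smul_eq_C_mul, LinearMap.map_smul, Polynomial.smul_eq_C_mul]
  have hνf : ν f = ((vc + WSum μ (f.map (algebraMap K L)).roots : Γ) : WithTop Γ) := by
    rw [← hext f]
    conv_lhs => rw [hprod]
    rw [AddValuation.map_mul, hCc, val_prod μ hμL, ← WithTop.coe_add]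
  have hsupne := epsSupport_nonempty hf0
  unfold eps
  rw [dif_pos hsupne]
  apply Finset.sup'_le
  intro r hr
  obtain ⟨⟨hr1, hrle⟩, hdne⟩ := mem_epsSupport.1 hr
  have hb1 := hasse_bound μ hμL hub r
  have hb2 : (((vc + (WSum μ (f.map (algebraMap K L)).roots - r • delta μ f)) : Γ) : WithTop Γ) ≤
      μ (Polynomial.hasseDeriv r (f.map (algebraMap K L))) := by
    rw [hdF r, AddValuation.map_mul, ← hCc.symm, WithTop.coe_add]
    exact add_le_add_right hb1 _
  have hdK : ν (f.hasseDeriv r) = μ (Polynomial.hasseDeriv r (f.map (algebraMap K L))) := by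
    rw [← hext, hasseDeriv_map_comm]
  have hcoe : ν (f.hasseDeriv r) = ((aval ν (f.hasseDeriv r) : Γ) : WithTop Γ) :=
    val_coe' ν (hν _) hdne
  have key : vc + (WSum μ (f.map (algebraMap K L)).roots - r • delta μ f) ≤
      aval ν (f.hasseDeriv r) := by
    rw [← WithTop.coe_le_coe]
    calc ((vc + (WSum μ (f.map (algebraMap K L)).roots - r • delta μ f) : Γ) : WithTop Γ)
        ≤ μ (Polynomial.hasseDeriv r (f.map (algebraMap K L))) := hb2
      _ = ((aval ν (f.hasseDeriv r) : Γ) : WithTop Γ) := by rw [← hdK, hcoe]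
  have havf : aval ν f = vc + WSum μ (f.map (algebraMap K L)).roots := by
    show WithTop.untopD 0 (ν f) = _
    rw [hνf, WithTop.untopD_coe]
  have hsub : aval ν f - aval ν (f.hasseDeriv r) ≤ r • delta μ f := by
    rw [havf]
    refine le_trans (sub_le_sub_left key _) (le_of_eq ?_)
    abel
  have hr0 : (0:ℚ) < (r:ℚ) := by exact_mod_cast hr1
  calc (r:ℚ)⁻¹ • (aval ν f - aval ν (f.hasseDeriv r))
      ≤ (r:ℚ)⁻¹ • ((r:ℚ) • delta μ f) := by
        refine smul_le_smul_of_nonneg_left ?_ (inv_nonneg.2 hr0.le)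
        rw [Nat.cast_smul_eq_nsmul]; exact hsub
    _ = delta μ f := inv_smul_smul₀ (ne_of_gt hr0) _

end Main

section Main2

variable {K : Type*} [Field K] {Γ : Type*} [AddCommGroup Γ] [LinearOrder Γ] [IsOrderedAddMonoid Γ]
  [Module ℚ Γ] [PosSMulStrictMono ℚ Γ] [PosSMulReflectLT ℚ Γ]
  {L : Type*} [Field L] [Algebra K L] [IsAlgClosed L]

theorem delta_le_eps (ν : AddValuation (Polynomial K) (WithTop Γ))
    (μ : AddValuation (Polynomial L) (WithTop Γ))
    (hν : TrivialSupport ν) (hμL : TrivialSupport μ) (hext : IsExtension μ ν)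
    (f : Polynomial K) (hf0 : 0 < f.natDegree) : delta μ f ≤ eps ν f := by
  classical
  letI : DecidableEq L := Classical.decEq L
  have hf : f ≠ 0 := fun h => by simp [h] at hf0
  have hF : f.map (algebraMap K L) ≠ 0 :=
    (Polynomial.map_ne_zero_iff (algebraMap K L).injective).2 hf
  have hsplit : (f.map (algebraMap K L)).Splits := IsAlgClosed.splits _
  have hcard : Multiset.card (f.map (algebraMap K L)).roots = f.natDegree := by
    rw [Polynomial.splits_iff_card_roots.1 hsplit, Polynomial.natDegree_map]
  have hprod : f.map (algebraMap K L) = C (f.map (algebraMap K L)).leadingCoeff *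
      ((f.map (algebraMap K L)).roots.map fun a => X - C a).prod :=
    hsplit.eq_prod_roots
  have hRne : (f.map (algebraMap K L)).roots ≠ 0 := by
    intro h; rw [h] at hcard; simp at hcard; omega
  have hne : ((f.map (algebraMap K L)).roots.toFinset).Nonempty := by
    rwa [Multiset.toFinset_nonempty]
  have hdelta : delta μ f = ((f.map (algebraMap K L)).roots.toFinset).sup' hne
      fun a => aval μ (X - C a) := by
    unfold delta; rw [dif_pos]
  have hub : ∀ a ∈ (f.map (algebraMap K L)).roots, WithTop.untopD 0 (μ (X - C a)) ≤ delta μ f := by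
    intro a haa
    rw [hdelta]
    exact Finset.le_sup' (fun a => aval μ (X - C a)) (Multiset.mem_toFinset.2 haa)
  have hcne : C (f.map (algebraMap K L)).leadingCoeff ≠ (0 : Polynomial L) := fun h =>
    (Polynomial.leadingCoeff_ne_zero.2 hF) (Polynomial.C_eq_zero.1 h)
  have hCc : μ (C (f.map (algebraMap K L)).leadingCoeff) =
      (WithTop.untopD 0 (μ (C (f.map (algebraMap K L)).leadingCoeff)) : Γ) :=
    val_coe μ hμL hcne
  set vc := WithTop.untopD 0 (μ (C (f.map (algebraMap K L)).leadingCoeff)) with hvc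
  have hdF : ∀ r : ℕ, Polynomial.hasseDeriv r (f.map (algebraMap K L)) =
      C (f.map (algebraMap K L)).leadingCoeff *
        Polynomial.hasseDeriv r (((f.map (algebraMap K L)).roots.map fun a => X - C a).prod) := by
    intro r
    conv_lhs => rw [hprod]
    rw [← Polynomial.smul_eq_C_mul, LinearMap.map_smul, Polynomial.smul_eq_C_mul]
  -- the multiset of maximizing roots
  obtain ⟨a₀, ha₀mem, ha₀⟩ := Finset.exists_mem_eq_sup' hne (fun a => aval μ (X - C a))
  set S := (f.map (algebraMap K L)).roots.filter
    (fun a => WithTop.untopD 0 (μ (X - C a)) = delta μ f) with hSdef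
  set T := (f.map (algebraMap K L)).roots.filter
    (fun a => ¬ WithTop.untopD 0 (μ (X - C a)) = delta μ f) with hTdef
  have hST : S + T = (f.map (algebraMap K L)).roots := Multiset.filter_add_not _ _
  have hS : ∀ a ∈ S, WithTop.untopD 0 (μ (X - C a)) = delta μ f :=
    fun a haa => (Multiset.mem_filter.1 haa).2
  have hT : ∀ a ∈ T, WithTop.untopD 0 (μ (X - C a)) < delta μ f := by
    intro a haa
    obtain ⟨hmem, hne'⟩ := Multiset.mem_filter.1 haa
    exact lt_of_le_of_ne (hub a hmem) hne'
  have hrS : a₀ ∈ S := by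
    refine Multiset.mem_filter.2 ⟨Multiset.mem_toFinset.1 ha₀mem, ?_⟩
    show aval μ (X - C a₀) = delta μ f
    rw [← ha₀, hdelta]
  set r := Multiset.card S with hrdef
  have hr1 : 1 ≤ r := Multiset.card_pos_iff_exists_mem.2 ⟨a₀, hrS⟩
  have hrle : r ≤ f.natDegree := by
    rw [← hcard, ← hST, Multiset.card_add]; omega
  have hexact : μ (Polynomial.hasseDeriv r
      (((f.map (algebraMap K L)).roots.map fun a => X - C a).prod)) =
      ((WSum μ T : Γ) : WithTop Γ) := by
    rw [← hST]
    exact hasse_exact μ hμL hS hT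
  have hWS : WSum μ S = r • delta μ f := WSum_const μ hS
  have hWR : WSum μ (f.map (algebraMap K L)).roots = WSum μ S + WSum μ T := by
    rw [← hST, WSum_add]
  have hνd : ν (f.hasseDeriv r) = ((vc + WSum μ T : Γ) : WithTop Γ) := by
    rw [← hext, hasseDeriv_map_comm, hdF r, AddValuation.map_mul, ← hCc.symm, hexact,
      ← WithTop.coe_add]
  have hdne : f.hasseDeriv r ≠ 0 := by
    intro h
    rw [h, AddValuation.map_zero] at hνd
    exact WithTop.top_ne_coe hνd
  have havald : aval ν (f.hasseDeriv r) = vc + WSum μ T := by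
    show WithTop.untopD 0 (ν (f.hasseDeriv r)) = _
    rw [hνd, WithTop.untopD_coe]
  have hνf : ν f = ((vc + (WSum μ S + WSum μ T) : Γ) : WithTop Γ) := by
    rw [← hext f]
    conv_lhs => rw [hprod]
    rw [AddValuation.map_mul, ← hCc.symm, val_prod μ hμL, hWR, ← WithTop.coe_add]
  have havalf : aval ν f = vc + (WSum μ S + WSum μ T) := by
    show WithTop.untopD 0 (ν f) = _
    rw [hνf, WithTop.untopD_coe]
  have hmem : r ∈ epsSupport f := mem_epsSupport.2 ⟨⟨hr1, hrle⟩, hdne⟩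
  unfold eps
  rw [dif_pos ⟨r, hmem⟩]
  refine le_trans (le_of_eq ?_) (Finset.le_sup'
    (fun k : ℕ => ((k : ℚ)⁻¹) • (aval ν f - aval ν (f.hasseDeriv k))) hmem)
  have hdiff : aval ν f - aval ν (f.hasseDeriv r) = r • delta μ f := by
    rw [havalf, havald, hWS]; abel
  have hr0 : (0:ℚ) < (r:ℚ) := by exact_mod_cast hr1
  rw [hdiff, ← Nat.cast_smul_eq_nsmul ℚ, inv_smul_smul₀ (ne_of_gt hr0)]

end Main2


/-- If `Q` is a key polynomial for `ν` and `a` is a root of `Q` with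
`μ(x - a) = δ(Q)`, then for every `b ∈ K̄` with `μ(a - b) ≥ δ(Q)` one has
`μ(x - b) ≥ δ(Q)`, hence `δ(p_b) ≥ δ(Q)` where `p_b` is the minimal polynomial of `b` over
`K`, and `[K(b) : K] ≥ [K(a) : K]`. -/
theorem keyPoly_minimal_pair_property {K : Type*} [Field K] {Γ : Type*}
    [AddCommGroup Γ] [LinearOrder Γ] [IsOrderedAddMonoid Γ] [Module ℚ Γ]
    [PosSMulStrictMono ℚ Γ] [PosSMulReflectLT ℚ Γ]
    {L : Type*} [Field L] [Algebra K L] [IsAlgClosure K L]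
    (ν : AddValuation (Polynomial K) (WithTop Γ)) (μ : AddValuation (Polynomial L) (WithTop Γ))
    (hν : TrivialSupport ν) (hμ : TrivialSupport μ) (hext : IsExtension μ ν)
    (Q : Polynomial K) (hQ : IsKeyPoly ν Q)
    (a : L) (ha : Polynomial.aeval a Q = 0)
    (hamax : μ (X - C a) = ((delta μ Q : Γ) : WithTop Γ)) :
    ∀ b : L, ((delta μ Q : Γ) : WithTop Γ) ≤ μ (C (a - b)) →
      ((delta μ Q : Γ) : WithTop Γ) ≤ μ (X - C b) ∧
      delta μ Q ≤ delta μ (minpoly K b) ∧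
      (minpoly K a).natDegree ≤ (minpoly K b).natDegree := by
  haveI : IsAlgClosed L := IsAlgClosure.isAlgClosed (R := K)
  haveI : Algebra.IsAlgebraic K L := IsAlgClosure.isAlgebraic
  intro b hb
  have hintb : IsIntegral K b := Algebra.IsIntegral.isIntegral b
  have hxb : (X : Polynomial L) - C b = (X - C a) + C (a - b) := by
    rw [Polynomial.C_sub]; ring
  have h1 : ((delta μ Q : Γ) : WithTop Γ) ≤ μ (X - C b) := by
    rw [hxb]
    exact AddValuation.map_le_add μ (le_of_eq hamax.symm) hb
  have hpb0 : minpoly K b ≠ 0 := minpoly.ne_zero hintb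
  have hpbmap : (minpoly K b).map (algebraMap K L) ≠ 0 :=
    (Polynomial.map_ne_zero_iff (algebraMap K L).injective).2 hpb0
  have hev : ((minpoly K b).map (algebraMap K L)).eval b = 0 := by
    rw [Polynomial.eval_map, ← Polynomial.aeval_def]
    exact minpoly.aeval K b
  have hXbne : (X : Polynomial L) - C b ≠ 0 := Polynomial.X_sub_C_ne_zero b
  have hcoe : μ (X - C b) = ((aval μ (X - C b) : Γ) : WithTop Γ) := val_coe μ hμ hXbne
  have h1' : delta μ Q ≤ aval μ (X - C b) := by
    rw [hcoe] at h1
    exact_mod_cast h1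
  have h2 : delta μ Q ≤ delta μ (minpoly K b) :=
    le_trans h1' (le_delta_of_root μ hpbmap hev)
  have hQpos : 0 < Q.natDegree := hQ.2.1
  have hpbpos : 0 < (minpoly K b).natDegree := minpoly.natDegree_pos hintb
  have he : eps ν Q ≤ eps ν (minpoly K b) :=
    le_trans (eps_le_delta ν μ hν hμ hext Q hQpos)
      (le_trans h2 (delta_le_eps ν μ hν hμ hext _ hpbpos))
  have hdeg : Q.natDegree ≤ (minpoly K b).natDegree := hQ.2.2 _ hpbpos he
  have hdvd : minpoly K a ∣ Q := minpoly.dvd K a ha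
  have hQne : Q ≠ 0 := hQ.1.ne_zero
  exact ⟨h1, h2, le_trans (Polynomial.natDegree_le_of_dvd hdvd hQne) hdeg⟩
end

section
/- Let K be a field, ν a valuation on K[x] with trivial support, K̄ an algebraic closure of K, μ and μ' two extensions of ν to K̄[x], and f ∈ K[x] a monic polynomial. Then max{μ(x−a) : a a root of f in K̄} = max{μ'(x−a) : a a root of f in K̄}; that is, δ(f) does not depend on the choice of the extension of ν to K̄[x]. -/
open Polynomial

section Proof14

open Finset (antidiagonal)

variable {Γ : Type*} [AddCommGroup Γ] [LinearOrder Γ] [IsOrderedAddMonoid Γ] {L : Type*} [Field L]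

private lemma wt_le_add_neg {a b : WithTop Γ} {γ : Γ} :
    a ≤ b + (γ : WithTop Γ) ↔ a + ((-γ : Γ) : WithTop Γ) ≤ b := by
  constructor
  · intro h
    calc a + ((-γ : Γ) : WithTop Γ) ≤ b + (γ : WithTop Γ) + ((-γ : Γ) : WithTop Γ) :=
          add_le_add_left h _
      _ = b := by rw [add_assoc, ← WithTop.coe_add, add_neg_cancel, WithTop.coe_zero, add_zero]
  · intro h
    calc a = a + ((-γ : Γ) : WithTop Γ) + (γ : WithTop Γ) := by
          rw [add_assoc, ← WithTop.coe_add, neg_add_cancel, WithTop.coe_zero, add_zero]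
      _ ≤ b + (γ : WithTop Γ) := add_le_add_left h _

private lemma wt_lt_add_neg {a b : WithTop Γ} {γ : Γ} :
    a < b + (γ : WithTop Γ) ↔ a + ((-γ : Γ) : WithTop Γ) < b := by
  rw [← not_iff_not, not_lt, not_lt]
  have := wt_le_add_neg (a := b) (b := a) (γ := -γ)
  rw [neg_neg] at this
  exact this.symm

private lemma my_nsmul_lt {a b : Γ} (h : a < b) {r : ℕ} (hr : 1 ≤ r) : r • a < r • b := by
  induction r with
  | zero => omega
  | succ n ih =>
    rcases Nat.eq_zero_or_pos n with rfl | hn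
    · simpa using h
    · rw [succ_nsmul, succ_nsmul]
      exact add_lt_add (ih hn) h

private lemma aval_coe (μ : AddValuation (Polynomial L) (WithTop Γ)) {p : Polynomial L}
    (h : μ p ≠ ⊤) : ((aval μ p : Γ) : WithTop Γ) = μ p := by
  obtain ⟨γ, hγ⟩ := WithTop.ne_top_iff_exists.mp h
  rw [aval, ← hγ, WithTop.untopD_coe]

private lemma hasseDeriv_map' {K : Type*} [Field K] [Algebra K L] (f : Polynomial K) (r : ℕ) :
    (f.hasseDeriv r).map (algebraMap K L) = (f.map (algebraMap K L)).hasseDeriv r := by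
  ext n
  simp [Polynomial.hasseDeriv_coeff, Polynomial.coeff_map]

private lemma val_multiset_prod (μ : AddValuation (Polynomial L) (WithTop Γ)) (s : Multiset L) :
    μ ((s.map fun b => X - C b).prod) = (s.map fun b => μ (X - C b)).sum := by
  induction s using Multiset.induction_on with
  | empty => simp
  | cons b s ih => simp [ih]

private lemma val_hasseDeriv_prod (μ : AddValuation (Polynomial L) (WithTop Γ)) (d : Γ)
    (s : Multiset L) (hs : ∀ b ∈ s, μ (X - C b) ≤ (d : WithTop Γ)) (r : ℕ) :
    μ ((s.map fun b => X - C b).prod) ≤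
      μ (((s.map fun b => X - C b).prod).hasseDeriv r) + ((r • d : Γ) : WithTop Γ) := by
  induction s using Multiset.induction_on generalizing r with
  | empty =>
    simp only [Multiset.map_zero, Multiset.prod_zero]
    rcases Nat.eq_zero_or_pos r with rfl | hr
    · simp [Polynomial.hasseDeriv_zero']
    · rw [Polynomial.hasseDeriv_apply_one r hr]
      simp
  | cons b s ih =>
    have hb : μ (X - C b) ≤ (d : WithTop Γ) := hs b (Multiset.mem_cons_self b s)
    have hs' : ∀ c ∈ s, μ (X - C c) ≤ (d : WithTop Γ) := fun c hc =>
      hs c (Multiset.mem_cons_of_mem hc)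
    rw [Multiset.map_cons, Multiset.prod_cons, Polynomial.hasseDeriv_mul, wt_le_add_neg]
    apply AddValuation.map_le_sum
    rintro ⟨i, j⟩ hij
    rw [Finset.HasAntidiagonal.mem_antidiagonal] at hij
    rcases i with _ | _ | i
    · -- i = 0
      have hj : j = r := by omega
      subst hj
      rw [Polynomial.hasseDeriv_zero']
      simp only [AddValuation.map_mul]
      rw [add_assoc]
      exact add_le_add_right (wt_le_add_neg.mp (ih hs' j)) _
    · -- i = 1
      have hj : r = j + 1 := by omega
      subst hj
      have h1 : Polynomial.hasseDeriv 1 (X - C b : Polynomial L) = 1 := by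
        rw [Polynomial.hasseDeriv_one']
        simp
      rw [h1, one_mul]
      simp only [AddValuation.map_mul]
      have h2 := wt_le_add_neg.mp (ih hs' j)
      refine le_trans (add_le_add_left (add_le_add_left hb
        (μ ((s.map fun b => X - C b).prod))) (((-((j + 1) • d) : Γ) : WithTop Γ))) ?_
      refine le_trans (le_of_eq ?_) h2
      rw [add_comm (d : WithTop Γ), add_assoc, ← WithTop.coe_add]
      have hdd : d + -((j + 1) • d) = -(j • d) := by rw [succ_nsmul]; abel
      rw [hdd]
    · -- i ≥ 2
      have h0 : Polynomial.hasseDeriv (i + 2) (X - C b : Polynomial L) = 0 := by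
        rw [map_sub, Polynomial.hasseDeriv_X _ (by omega : 1 < i + 2),
          Polynomial.hasseDeriv_C _ b (by omega : 0 < i + 2), sub_zero]
      rw [h0, zero_mul, AddValuation.map_zero]
      exact le_top

private lemma val_hasseDeriv_prod_lt (μ : AddValuation (Polynomial L) (WithTop Γ))
    (hμ : TrivialSupport μ) (d : Γ) (s : Multiset L)
    (hs : ∀ b ∈ s, μ (X - C b) < (d : WithTop Γ)) {r : ℕ} (hr : 1 ≤ r) :
    μ ((s.map fun b => X - C b).prod) <
      μ (((s.map fun b => X - C b).prod).hasseDeriv r) + ((r • d : Γ) : WithTop Γ) := by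
  classical
  have hP0 : (s.map fun b => X - C b).prod ≠ 0 := by
    apply Multiset.prod_ne_zero
    intro h
    obtain ⟨b, _, hb⟩ := Multiset.mem_map.mp h
    exact Polynomial.X_sub_C_ne_zero b hb
  have hPfin : μ ((s.map fun b => X - C b).prod) ≠ ⊤ := fun h => hP0 (hμ _ h)
  by_cases hT : μ (((s.map fun b => X - C b).prod).hasseDeriv r) = ⊤
  · rw [hT, top_add]
    exact lt_top_iff_ne_top.mpr hPfin
  · rcases Multiset.empty_or_exists_mem s with rfl | ⟨b0, hb0⟩
    · exfalso
      apply hT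
      simp only [Multiset.map_zero, Multiset.prod_zero]
      rw [Polynomial.hasseDeriv_apply_one r hr, AddValuation.map_zero]
    · have hne : s.toFinset.Nonempty := ⟨b0, Multiset.mem_toFinset.mpr hb0⟩
      set d' := s.toFinset.sup' hne fun b => aval μ (X - C b) with hd'
      have hfin : ∀ b ∈ s, ((aval μ (X - C b) : Γ) : WithTop Γ) = μ (X - C b) := fun b hb =>
        aval_coe μ (ne_top_of_lt (hs b hb))
      have hle' : ∀ b ∈ s, μ (X - C b) ≤ (d' : WithTop Γ) := fun b hb => by
        rw [← hfin b hb]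
        exact WithTop.coe_le_coe.mpr (Finset.le_sup' (fun a => aval μ (X - C a)) (Multiset.mem_toFinset.mpr hb))
      have hd'd : d' < d := by
        rw [hd']
        rw [Finset.sup'_lt_iff hne]
        intro b hb
        have hb' := Multiset.mem_toFinset.mp hb
        have h2 := hs b hb'
        rw [← hfin b hb'] at h2
        exact WithTop.coe_lt_coe.mp h2
      refine lt_of_le_of_lt (val_hasseDeriv_prod μ d' s hle' r) ?_
      obtain ⟨γ, hγ⟩ := WithTop.ne_top_iff_exists.mp hT
      rw [← hγ, ← WithTop.coe_add, ← WithTop.coe_add]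
      exact WithTop.coe_lt_coe.mpr (add_lt_add_right (my_nsmul_lt hd'd hr) γ)

private lemma exists_hasseDeriv_eq (μ : AddValuation (Polynomial L) (WithTop Γ))
    (hμ : TrivialSupport μ) (s : Multiset L) (δ : Γ)
    (hle : ∀ b ∈ s, μ (X - C b) ≤ (δ : WithTop Γ))
    (hex : ∃ b ∈ s, μ (X - C b) = (δ : WithTop Γ)) :
    ∃ m : ℕ, 1 ≤ m ∧
      μ ((s.map fun b => X - C b).prod) =
        μ (((s.map fun b => X - C b).prod).hasseDeriv m) + ((m • δ : Γ) : WithTop Γ) := by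
  classical
  set s₁ := s.filter (fun b => μ (X - C b) = (δ : WithTop Γ)) with hs₁
  set s₂ := s.filter (fun b => ¬ μ (X - C b) = (δ : WithTop Γ)) with hs₂
  set m := Multiset.card s₁ with hm
  set g := (s₁.map fun b => X - C b).prod with hg
  set h := (s₂.map fun b => X - C b).prod with hh
  have hsplit : s₁ + s₂ = s := Multiset.filter_add_not _ s
  have hgh : (s.map fun b => X - C b).prod = g * h := by
    rw [← hsplit, Multiset.map_add, Multiset.prod_add]
  have hμg : μ g = ((m • δ : Γ) : WithTop Γ) := by
    rw [hg, val_multiset_prod]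
    have hrep : s₁.map (fun b => μ (X - C b)) = Multiset.replicate m ((δ : WithTop Γ)) := by
      rw [Multiset.eq_replicate]
      refine ⟨by rw [Multiset.card_map], ?_⟩
      intro x hx
      obtain ⟨b, hb, rfl⟩ := Multiset.mem_map.mp hx
      exact Multiset.of_mem_filter (p := fun b => μ (X - C b) = (δ : WithTop Γ)) hb
    rw [hrep, Multiset.sum_replicate, WithTop.coe_nsmul]
  have hm1 : 1 ≤ m := by
    obtain ⟨b, hb, hbδ⟩ := hex
    have : b ∈ s₁ := Multiset.mem_filter.mpr ⟨hb, hbδ⟩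
    have := Multiset.card_pos_iff_exists_mem.mpr ⟨b, this⟩
    omega
  have hhfin : μ h ≠ ⊤ := by
    intro hT
    have hh0 : h ≠ 0 := by
      apply Multiset.prod_ne_zero
      intro hmem
      obtain ⟨b, _, hb⟩ := Multiset.mem_map.mp hmem
      exact Polynomial.X_sub_C_ne_zero b hb
    exact hh0 (hμ _ hT)
  have hgdeg : g.natDegree = m := by
    rw [hg, Polynomial.natDegree_multiset_prod_X_sub_C_eq_card]
  have hgmon : g.Monic := Polynomial.monic_multiset_prod_of_monic _ _
    (fun b _ => Polynomial.monic_X_sub_C b)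
  have hgd : g.hasseDeriv m = 1 := by
    ext n
    rw [Polynomial.hasseDeriv_coeff]
    cases n with
    | zero =>
      simp only [zero_add, Nat.choose_self, Nat.cast_one, one_mul]
      rw [← hgdeg, hgmon.coeff_natDegree, Polynomial.coeff_one]
      simp
    | succ k =>
      rw [Polynomial.coeff_eq_zero_of_natDegree_lt (by rw [hgdeg]; omega), mul_zero,
        Polynomial.coeff_one]
      simp
  refine ⟨m, hm1, ?_⟩
  rw [hgh, AddValuation.map_mul, hμg]
  suffices hkey : μ ((g * h).hasseDeriv m) = μ h by rw [hkey, add_comm]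
  rw [Polynomial.hasseDeriv_mul]
  have hmem : ((m, 0) : ℕ × ℕ) ∈ Finset.HasAntidiagonal.antidiagonal m := by
    simp
  rw [← Finset.add_sum_erase _ _ hmem]
  simp only [hgd, Polynomial.hasseDeriv_zero', one_mul]
  apply AddValuation.map_add_eq_of_lt_left
  apply AddValuation.map_lt_sum μ hhfin
  rintro ⟨i, j⟩ hij
  obtain ⟨hne', hmem'⟩ := Finset.mem_erase.mp hij
  have hijm : i + j = m := Finset.HasAntidiagonal.mem_antidiagonal.mp hmem'
  have hj : 1 ≤ j := by
    rcases Nat.eq_zero_or_pos j with rfl | hpos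
    · exfalso
      apply hne'
      have : i = m := by omega
      subst this
      rfl
    · exact hpos
  rw [AddValuation.map_mul]
  have hA : ((j • δ : Γ) : WithTop Γ) ≤ μ (g.hasseDeriv i) := by
    have h1 := val_hasseDeriv_prod μ δ s₁ (fun b hb => (Multiset.of_mem_filter (p := fun b => μ (X - C b) = (δ : WithTop Γ)) hb).le) i
    rw [← hg, hμg, wt_le_add_neg, ← WithTop.coe_add] at h1
    have heq : m • δ + -(i • δ) = j • δ := by
      rw [← hijm, add_nsmul]
      abel
    rwa [heq] at h1
  have hB : μ h + ((-(j • δ) : Γ) : WithTop Γ) < μ (h.hasseDeriv j) := by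
    rw [← wt_lt_add_neg]
    apply val_hasseDeriv_prod_lt μ hμ δ s₂ _ hj
    intro b hb
    exact lt_of_le_of_ne (hle b (Multiset.mem_of_mem_filter hb)) (Multiset.of_mem_filter (p := fun b => ¬ μ (X - C b) = (δ : WithTop Γ)) hb)
  calc μ h = (μ h + ((-(j • δ) : Γ) : WithTop Γ)) + ((j • δ : Γ) : WithTop Γ) := by
        rw [add_assoc, ← WithTop.coe_add, neg_add_cancel, WithTop.coe_zero, add_zero]
    _ < μ (h.hasseDeriv j) + ((j • δ : Γ) : WithTop Γ) :=
        WithTop.add_lt_add_right WithTop.coe_ne_top hB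
    _ ≤ μ (h.hasseDeriv j) + μ (g.hasseDeriv i) := add_le_add_right hA _
    _ = μ (g.hasseDeriv i) + μ (h.hasseDeriv j) := add_comm _ _

private lemma delta_spec {K : Type*} [Field K] [Algebra K L] [IsAlgClosed L]
    (μ : AddValuation (Polynomial L) (WithTop Γ)) (hμ : TrivialSupport μ)
    (f : Polynomial K) (hf : f.Monic) (hdeg : 0 < f.natDegree) :
    (∀ b ∈ (f.map (algebraMap K L)).roots, μ (X - C b) ≤ ((delta μ f : Γ) : WithTop Γ)) ∧
    (∃ b ∈ (f.map (algebraMap K L)).roots, μ (X - C b) = ((delta μ f : Γ) : WithTop Γ)) := by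
  letI : DecidableEq L := Classical.decEq L
  have hcard : Multiset.card (f.map (algebraMap K L)).roots = f.natDegree :=
    (IsAlgClosed.splits (f.map (algebraMap K L))).natDegree_eq_card_roots.symm.trans
      (Polynomial.natDegree_map _)
  have hne0 : (f.map (algebraMap K L)).roots ≠ 0 := by
    intro h0
    rw [h0] at hcard
    simp only [Multiset.card_zero] at hcard
    omega
  have hne : (f.map (algebraMap K L)).roots.toFinset.Nonempty := by
    obtain ⟨b, hb⟩ := Multiset.exists_mem_of_ne_zero hne0
    exact ⟨b, Multiset.mem_toFinset.mpr hb⟩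
  have hδ : delta μ f =
      (f.map (algebraMap K L)).roots.toFinset.sup' hne fun a => aval μ (X - C a) := by
    simp only [delta]
    rw [dif_pos hne]
  have hfin : ∀ b ∈ (f.map (algebraMap K L)).roots,
      ((aval μ (X - C b) : Γ) : WithTop Γ) = μ (X - C b) := fun b _ =>
    aval_coe μ (fun hT => Polynomial.X_sub_C_ne_zero b (hμ _ hT))
  constructor
  · intro b hb
    rw [← hfin b hb, hδ]
    exact WithTop.coe_le_coe.mpr (Finset.le_sup' (fun a => aval μ (X - C a)) (Multiset.mem_toFinset.mpr hb))
  · obtain ⟨b, hb, hbe⟩ := Finset.exists_mem_eq_sup' hne fun a => aval μ (X - C a)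
    have hb' := Multiset.mem_toFinset.mp hb
    refine ⟨b, hb', ?_⟩
    rw [hδ, hbe]
    exact (hfin b hb').symm

private lemma pchar_of_ext {K : Type*} [Field K] [Algebra K L] [IsAlgClosed L]
    (ν : AddValuation (Polynomial K) (WithTop Γ)) (μ : AddValuation (Polynomial L) (WithTop Γ))
    (hμ : TrivialSupport μ) (hext : IsExtension μ ν) (f : Polynomial K) (hf : f.Monic)
    (hdeg : 0 < f.natDegree) :
    (∀ r : ℕ, 1 ≤ r → ν f ≤ ν (f.hasseDeriv r) + ((r • delta μ f : Γ) : WithTop Γ)) ∧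
    (∃ r : ℕ, 1 ≤ r ∧ ν f = ν (f.hasseDeriv r) + ((r • delta μ f : Γ) : WithTop Γ)) := by
  obtain ⟨hle, hex⟩ := delta_spec μ hμ f hf hdeg
  have hroots : f.map (algebraMap K L) =
      ((f.map (algebraMap K L)).roots.map fun a => X - C a).prod :=
    (IsAlgClosed.splits (f.map (algebraMap K L))).eq_prod_roots_of_monic (hf.map _)
  have htrans : ∀ r : ℕ, μ ((f.map (algebraMap K L)).hasseDeriv r) = ν (f.hasseDeriv r) :=
    fun r => by rw [← hasseDeriv_map', hext]
  have htrans0 : μ (f.map (algebraMap K L)) = ν f := hext f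
  constructor
  · intro r hr
    have h1 := val_hasseDeriv_prod μ (delta μ f) (f.map (algebraMap K L)).roots hle r
    rw [← hroots, htrans0, htrans] at h1
    exact h1
  · obtain ⟨mm, hmm, heq⟩ :=
      exists_hasseDeriv_eq μ hμ (f.map (algebraMap K L)).roots (delta μ f) hle hex
    rw [← hroots, htrans0, htrans] at heq
    exact ⟨mm, hmm, heq⟩

end Proof14

/-- If `μ` and `μ'` are two extensions of `ν` to `K̄[x]`, then for every
monic `f ∈ K[x]` one has `max{μ(x - a) : a root of f} = max{μ'(x - a) : a root of f}`;
that is, `δ(f)` does not depend on the choice of the extension of `ν`. -/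
theorem delta_independent_of_extension {K : Type*} [Field K] {Γ : Type*}
    [AddCommGroup Γ] [LinearOrder Γ] [IsOrderedAddMonoid Γ]
    {L : Type*} [Field L] [Algebra K L] [IsAlgClosure K L]
    (ν : AddValuation (Polynomial K) (WithTop Γ))
    (μ μ' : AddValuation (Polynomial L) (WithTop Γ))
    (hν : TrivialSupport ν) (hμ : TrivialSupport μ) (hμ' : TrivialSupport μ')
    (hext : IsExtension μ ν) (hext' : IsExtension μ' ν)
    (f : Polynomial K) (hf : f.Monic) (hdeg : 0 < f.natDegree) :
    delta μ f = delta μ' f := by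
  haveI : IsAlgClosed L := IsAlgClosure.isAlgClosed K
  obtain ⟨h1, r1, hr1, he1⟩ := pchar_of_ext ν μ hμ hext f hf hdeg
  obtain ⟨h2, r2, hr2, he2⟩ := pchar_of_ext ν μ' hμ' hext' f hf hdeg
  have hνf : ν f ≠ ⊤ := fun h => hf.ne_zero (hν f h)
  by_contra hne
  rcases lt_trichotomy (delta μ f) (delta μ' f) with hlt | heq | hlt
  · have hD : ν (f.hasseDeriv r2) ≠ ⊤ := by
      intro hT
      rw [hT, top_add] at he2
      exact hνf he2
    obtain ⟨γ, hγ⟩ := WithTop.ne_top_iff_exists.mp hD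
    have hle := h1 r2 hr2
    rw [he2, ← hγ, ← WithTop.coe_add, ← WithTop.coe_add, WithTop.coe_le_coe] at hle
    exact absurd hle (not_le.mpr (add_lt_add_right (my_nsmul_lt hlt hr2) γ))
  · exact hne heq
  · have hD : ν (f.hasseDeriv r1) ≠ ⊤ := by
      intro hT
      rw [hT, top_add] at he1
      exact hνf he1
    obtain ⟨γ, hγ⟩ := WithTop.ne_top_iff_exists.mp hD
    have hle := h2 r1 hr1
    rw [he1, ← hγ, ← WithTop.coe_add, ← WithTop.coe_add, WithTop.coe_le_coe] at hle
    exact absurd hle (not_le.mpr (add_lt_add_right (my_nsmul_lt hlt hr1) γ))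
end
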